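/- Every joint probability distribution p_{ab} = Tr((P_a ⊗ P_b) ρ) arising from a bipartite mixed state ρ on ℂⁿ ⊗ ℂⁿ and local orthogonal projections P_a, P_b can be reproduced by a mixed state ρ' on ℝ^{2n} ⊗ ℝ^{2n} and local real orthogonal projections P'_a, P'_b: p_{ab} = Tr((P'_a ⊗ P'_b) ρ'), where P'_a, P'_b depend only on P_a, P_b respectively and ρ' depends only on ρ. -/

import Mathlib

open Matrix Kronecker ComplexOrder

/-- Realification: replace each complex entry `a + b i` by the real `2×2` block
`[[a, -b], [b, a]]`.  The row/column index `(j, s)` corresponds to row `2j + s`. -/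
def Phi {n : ℕ} (A : Matrix (Fin n) (Fin n) ℂ) :
    Matrix (Fin n × Fin 2) (Fin n × Fin 2) ℝ :=
  fun p q => !![(A p.1 q.1).re, -(A p.1 q.1).im;
                (A p.1 q.1).im,  (A p.1 q.1).re] p.2 q.2

lemma Phi_mul {n : ℕ} (A B : Matrix (Fin n) (Fin n) ℂ) :
    Phi (A * B) = Phi A * Phi B := by
  ext ⟨j, s⟩ ⟨j', s'⟩
  rw [Matrix.mul_apply, Fintype.sum_prod_type]
  simp only [Phi, Matrix.mul_apply]
  fin_cases s <;> fin_cases s' <;>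
    simp [Fin.sum_univ_two, Complex.re_sum, Complex.im_sum, Complex.mul_re, Complex.mul_im,
      Finset.sum_add_distrib, Finset.sum_sub_distrib] <;> ring

lemma Phi_transpose {n : ℕ} (A : Matrix (Fin n) (Fin n) ℂ) :
    (Phi A)ᵀ = Phi Aᴴ := by
  ext ⟨j, s⟩ ⟨j', s'⟩
  simp only [Phi, Matrix.transpose_apply, Matrix.conjTranspose_apply]
  fin_cases s <;> fin_cases s' <;> simp

lemma half_smul_psd {m : Type*} [Fintype m] [DecidableEq m] (M : Matrix m m ℝ)
    (h : M.PosSemidef) : ((1/2 : ℝ) • M).PosSemidef := by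
  constructor
  · unfold Matrix.IsHermitian
    rw [Matrix.conjTranspose_smul, h.1]
    simp
  · exact (h.smul (by norm_num : (0:ℝ) ≤ 1/2)).2

lemma key_scalar (a b u v : ℂ) :
    (a * b * (v * (starRingEnd ℂ) u)).re =
    ∑ s : Fin 2, ∑ t : Fin 2, ∑ s' : Fin 2, ∑ t' : Fin 2,
      (!![a.re, -a.im; a.im, a.re] s s') *
      (!![((starRingEnd ℂ) b).re, -((starRingEnd ℂ) b).im;
          ((starRingEnd ℂ) b).im, ((starRingEnd ℂ) b).re] t t') *
      ((1/2 : ℝ) * ((!![v.re, -v.im; v.im, v.re] s' t') * (!![u.re, -u.im; u.im, u.re] s t))) := by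
  simp [Fin.sum_univ_two, Complex.mul_re, Complex.mul_im]
  ring

/-- Every bipartite joint probability distribution arising from a mixed state and local
orthogonal projections on `ℂⁿ ⊗ ℂⁿ` can be reproduced by a mixed state and local
orthogonal projections on `ℝ^{2n} ⊗ ℝ^{2n}`, with the real projections depending only on
the corresponding complex projections and the real state depending only on the complex
state. -/
theorem real_reproduces_complex_joint_probabilities (n : ℕ)
    (ρ : Matrix (Fin n × Fin n) (Fin n × Fin n) ℂ)
    (hρ : ρ.PosSemidef) (hρtr : ρ.trace = 1) :
    ∃ (ρ' : Matrix ((Fin n × Fin 2) × (Fin n × Fin 2)) ((Fin n × Fin 2) × (Fin n × Fin 2)) ℝ)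
      (F G : Matrix (Fin n) (Fin n) ℂ → Matrix (Fin n × Fin 2) (Fin n × Fin 2) ℝ),
      ρ'.PosSemidef ∧ ρ'.trace = 1 ∧
      ∀ Pa Pb : Matrix (Fin n) (Fin n) ℂ,
        Pa * Pa = Pa → Paᴴ = Pa → Pb * Pb = Pb → Pbᴴ = Pb →
        (F Pa * F Pa = F Pa ∧ (F Pa)ᵀ = F Pa) ∧
        (G Pb * G Pb = G Pb ∧ (G Pb)ᵀ = G Pb) ∧
        ((Pa ⊗ₖ Pb) * ρ).trace = ((((F Pa) ⊗ₖ (G Pb)) * ρ').trace : ℝ) := by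
  classical
  open scoped MatrixOrder in set B : Matrix (Fin n × Fin n) (Fin n × Fin n) ℂ := CFC.sqrt ρ with hBdef
  open scoped MatrixOrder in have hB : B * B = ρ := CFC.sqrt_mul_sqrt_self ρ hρ.nonneg
  open scoped MatrixOrder in have hBh : Bᴴ = B := (CFC.sqrt_nonneg ρ).posSemidef.1
  have hBsym : ∀ p q, B p q = (starRingEnd ℂ) (B q p) := by
    intro p q
    have := congrFun (congrFun hBh p) q
    simpa [Matrix.conjTranspose_apply] using this.symm
  -- the real purification columns
  set C : Matrix ((Fin n × Fin 2) × (Fin n × Fin 2)) (Fin n × Fin n) ℝ :=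
    fun P m => Phi (fun j k => B (j, k) m) P.1 P.2 with hCdef
  refine ⟨(1/2 : ℝ) • (C * Cᵀ), Phi, fun P => Phi (P.map (starRingEnd ℂ)), ?_, ?_, ?_⟩
  · -- positive semidefinite
    apply half_smul_psd
    have : Cᵀ = Cᴴ := by
      ext p q; simp [Matrix.conjTranspose_apply, Matrix.transpose_apply]
    rw [this]
    exact Matrix.posSemidef_self_mul_conjTranspose C
  · -- trace one
    have htr : (B * B).trace = 1 := by rw [hB]; exact hρtr
    have h1 : ((1:ℂ)).re = (1:ℝ) := by simp
    have := congrArg Complex.re htr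
    rw [h1] at this
    rw [Matrix.trace_smul]
    rw [show (C * Cᵀ).trace = 2 from ?_]
    · norm_num
    · -- compute the trace of C * Cᵀ
      have expand : (C * Cᵀ).trace = ∑ P, ∑ m, C P m * C P m := by
        simp [Matrix.trace, Matrix.diag, Matrix.mul_apply, Matrix.transpose_apply]
      rw [expand]
      have expand2 : (B * B).trace = ∑ p, ∑ m, B p m * (starRingEnd ℂ) (B p m) := by
        simp only [Matrix.trace, Matrix.diag, Matrix.mul_apply]
        refine Finset.sum_congr rfl fun p _ => Finset.sum_congr rfl fun m _ => ?_
        rw [← hBsym m p]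
      rw [expand2] at htr
      have := congrArg Complex.re htr
      simp only [Complex.re_sum, h1] at this
      calc ∑ P, ∑ m, C P m * C P m
          = ∑ p : Fin n × Fin n, ∑ m, 2 * (B p m * (starRingEnd ℂ) (B p m)).re := ?_
        _ = 2 := by
            simp only [← Finset.mul_sum]
            rw [this]; norm_num
      rw [Finset.sum_comm]
      conv_rhs => rw [Finset.sum_comm]
      refine Finset.sum_congr rfl fun m _ => ?_
      rw [Fintype.sum_prod_type]
      rw [Fintype.sum_prod_type]
      conv_rhs => rw [Fintype.sum_prod_type]
      refine Finset.sum_congr rfl fun j _ => ?_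
      simp only [Fintype.sum_prod_type]
      rw [Finset.sum_comm]
      refine Finset.sum_congr rfl fun k _ => ?_
      simp [hCdef, Phi, Fin.sum_univ_two, Complex.mul_re, Complex.mul_im]
      ring
  · -- main identity
    intro Pa Pb hPa1 hPa2 hPb1 hPb2
    have hGherm : (Pb.map (starRingEnd ℂ))ᴴ = Pb.map (starRingEnd ℂ) := by
      ext p q
      have := congrFun (congrFun hPb2 q) p
      simp only [Matrix.conjTranspose_apply, Complex.star_def] at this ⊢
      simp only [Matrix.map_apply, Complex.conj_conj]
      exact this.symm
    refine ⟨⟨?_, ?_⟩, ⟨?_, ?_⟩, ?_⟩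
    · rw [← Phi_mul, hPa1]
    · rw [Phi_transpose, hPa2]
    · rw [← Phi_mul, ← Matrix.map_mul, hPb1]
    · rw [Phi_transpose, hGherm]
    · -- the trace identity
      have hkron : (Pa ⊗ₖ Pb)ᴴ = Pa ⊗ₖ Pb := by
        ext ⟨j, k⟩ ⟨j', k'⟩
        have ha : star (Pa j' j) = Pa j j' := by
          have := congrFun (congrFun hPa2 j) j'
          simpa [Matrix.conjTranspose_apply] using this
        have hb : star (Pb k' k) = Pb k k' := by
          have := congrFun (congrFun hPb2 k) k'
          simpa [Matrix.conjTranspose_apply] using this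
        simp only [Matrix.conjTranspose_apply, Matrix.kroneckerMap_apply, star_mul']
        rw [ha, hb, mul_comm]
      have hreal : ((starRingEnd ℂ) ((Pa ⊗ₖ Pb) * ρ).trace) = ((Pa ⊗ₖ Pb) * ρ).trace := by
        have h1 : (((Pa ⊗ₖ Pb) * ρ)ᴴ).trace = ((Pa ⊗ₖ Pb) * ρ).trace := by
          rw [Matrix.conjTranspose_mul, hρ.1, hkron, Matrix.trace_mul_comm]
        calc (starRingEnd ℂ) ((Pa ⊗ₖ Pb) * ρ).trace
            = star ((Pa ⊗ₖ Pb) * ρ).trace := rfl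
          _ = (((Pa ⊗ₖ Pb) * ρ)ᴴ).trace := (Matrix.trace_conjTranspose _).symm
          _ = ((Pa ⊗ₖ Pb) * ρ).trace := h1
      rw [← Complex.conj_eq_iff_re.mp hreal]
      congr 1
      -- now a real identity
      have hL : (((Pa ⊗ₖ Pb) * ρ).trace).re
          = ∑ y : (Fin n × Fin n) × ((Fin n × Fin n) × (Fin n × Fin n)),
              ((Pa ⊗ₖ Pb) y.1 y.2.1 * (B y.2.1 y.2.2 * B y.2.2 y.1)).re := by
        rw [← hB]
        rw [← Complex.re_sum]
        congr 1
        simp only [Matrix.trace, Matrix.diag, Matrix.mul_apply, Finset.mul_sum,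
          Fintype.sum_prod_type]
      have hR : ((Phi Pa ⊗ₖ Phi (Pb.map (starRingEnd ℂ))) * ((1/2 : ℝ) • (C * Cᵀ))).trace
          = ∑ x : (((Fin n × Fin 2) × (Fin n × Fin 2)) ×
              (((Fin n × Fin 2) × (Fin n × Fin 2)) × (Fin n × Fin n))),
              (Phi Pa ⊗ₖ Phi (Pb.map (starRingEnd ℂ))) x.1 x.2.1 *
                ((1/2 : ℝ) * (C x.2.1 x.2.2 * C x.1 x.2.2)) := by
        simp only [Matrix.trace, Matrix.diag, Matrix.mul_apply, Matrix.smul_apply,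
          Matrix.transpose_apply, smul_eq_mul, Finset.mul_sum, Fintype.sum_prod_type]
      rw [hL, hR]
      -- reindex via an explicit equivalence
      let e : ((((Fin n × Fin 2) × (Fin n × Fin 2)) ×
              (((Fin n × Fin 2) × (Fin n × Fin 2)) × (Fin n × Fin n)))) ≃
          (((Fin n × Fin n) × ((Fin n × Fin n) × (Fin n × Fin n))) ×
            ((Fin 2 × Fin 2) × (Fin 2 × Fin 2))) :=
        { toFun := fun x => (((x.1.1.1, x.1.2.1), ((x.2.1.1.1, x.2.1.2.1), x.2.2)),
            ((x.1.1.2, x.1.2.2), (x.2.1.1.2, x.2.1.2.2)))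
          invFun := fun y => (((y.1.1.1, y.2.1.1), (y.1.1.2, y.2.1.2)),
            (((y.1.2.1.1, y.2.2.1), (y.1.2.1.2, y.2.2.2)), y.1.2.2))
          left_inv := fun _ => rfl
          right_inv := fun _ => rfl }
      rw [← Equiv.sum_comp e.symm (fun x => (Phi Pa ⊗ₖ Phi (Pb.map (starRingEnd ℂ))) x.1 x.2.1 *
            ((1/2 : ℝ) * (C x.2.1 x.2.2 * C x.1 x.2.2)))]
      simp only [Fintype.sum_prod_type]
      refine Finset.sum_congr rfl fun j _ => ?_
      refine Finset.sum_congr rfl fun k _ => ?_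
      refine Finset.sum_congr rfl fun j' _ => ?_
      refine Finset.sum_congr rfl fun k' _ => ?_
      refine Finset.sum_congr rfl fun m1 _ => ?_
      refine Finset.sum_congr rfl fun m2 _ => ?_
      rw [hBsym (m1, m2) (j, k)]
      simp [hCdef, Phi, e, Fin.sum_univ_two, Matrix.map_apply,
        Complex.mul_re, Complex.mul_im]
      ring
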